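/- Projection preserves value-hood under substitution: if σ maps variables to values and the projection ⟦e[σ]⟧_ℓ of the substituted expression is a value, then ⟦e⟧_ℓ (if defined) is also a value. -/
import Mathlib


/-- Annotations: compute, prove, or both. -/
inductive Ann : Type
  | C : Ann
  | P : Ann
  | CP : Ann
deriving DecidableEq

/-- Projection labels: a single procedure. -/
inductive Label : Type
  | C : Label
  | P : Label
deriving DecidableEq

/-- `subA ℓ a` holds when the procedure `ℓ` is contained in annotation `a`
(treating C, P ⊆ CP). -/
def subA : Label → Ann → Bool
  | .C, .C => true
  | .C, .CP => true
  | .P, .P => true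
  | .P, .CP => true
  | _, _ => false

/-- Underlying values, possibly containing variables. -/
inductive V : Type
  | unit : V
  | const : Nat → V
  | var : String → V
deriving DecidableEq

/-- Annotated expressions: annotated values, let-expressions with a labeled
bound variable, and conditionals with annotated guards. -/
inductive AExpr : Type
  | aval : V → Ann → AExpr
  | alet : String → Ann → AExpr → AExpr → AExpr
  | aif : V → Ann → AExpr → AExpr → AExpr

/-- Projected (base) expressions, including sequencing. -/
inductive BExpr : Type
  | bval : V → BExpr
  | blet : String → BExpr → BExpr → BExpr
  | bseq : BExpr → BExpr → BExpr
  | bif : V → BExpr → BExpr → BExpr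
deriving DecidableEq

/-- A base expression is a value when it is `bval`. -/
def isVal : BExpr → Bool
  | .bval _ => true
  | _ => false

/-- The partial projection `⟦·⟧_ℓ`: annotated values project to the underlying
value when visible and to unit otherwise; visible lets project to lets,
invisible lets collapse (dropping an inert value or keeping a sequencing);
visible conditionals project to conditionals, invisible ones require equal
branch projections. -/
def proj (ℓ : Label) : AExpr → Option BExpr
  | .aval v a => some (.bval (if subA ℓ a then v else .unit))
  | .alet x l e₁ e₂ =>
      if subA ℓ l then
        match proj ℓ e₁, proj ℓ e₂ with
        | some p₁, some p₂ => some (.blet x p₁ p₂)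
        | _, _ => none
      else
        match proj ℓ e₁, proj ℓ e₂ with
        | some p₁, some p₂ => if isVal p₁ then some p₂ else some (.bseq p₁ p₂)
        | _, _ => none
  | .aif v a e₁ e₂ =>
      if subA ℓ a then
        match proj ℓ e₁, proj ℓ e₂ with
        | some p₁, some p₂ => some (.bif v p₁ p₂)
        | _, _ => none
      else
        match proj ℓ e₁, proj ℓ e₂ with
        | some p₁, some p₂ => if p₁ = p₂ then some p₁ else none
        | _, _ => none

/-- Apply a substitution `σ` (mapping variables to values) to an underlying
value. -/
def substVs (s : String → V) : V → V
  | .var y => s y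
  | w => w

/-- Apply a substitution structurally to an annotated expression, respecting
binders (the bound variable of a let is left untouched in its body). -/
def substAs (s : String → V) : AExpr → AExpr
  | .aval w a => .aval (substVs s w) a
  | .alet y l e1 e2 =>
      .alet y l (substAs s e1) (substAs (fun z => if z = y then .var z else s z) e2)
  | .aif w a e1 e2 => .aif (substVs s w) a (substAs s e1) (substAs s e2)

/-- Projection preserves value-hood under substitution: if the projection of
the substituted expression is a value, then the projection of the original
expression (if defined) is also a value. -/
theorem proj_subst_isVal (l : Label) (s : String → V) (e : AExpr)
    (b b' : BExpr)
    (h1 : proj l (substAs s e) = some b) (hb : isVal b = true)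
    (h2 : proj l e = some b') :
    isVal b' = true := by
  induction e generalizing s b b' with
  | aval v a =>
    simp [proj, substAs] at h2
    subst h2
    simp [isVal]
  | alet x ln e1 e2 ih1 ih2 =>
    simp only [substAs, proj] at h1 h2
    by_cases hl : subA l ln <;> simp only [hl, if_true, if_false, Bool.false_eq_true] at h1 h2
    · -- visible let: result is blet, not a value
      cases hp1 : proj l (substAs s e1) <;> rw [hp1] at h1 <;>
        cases hp2 : proj l (substAs (fun z => if z = x then .var z else s z) e2) <;>
        rw [hp2] at h1 <;> simp at h1
      subst h1; simp [isVal] at hb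
    · cases hp1 : proj l (substAs s e1) <;> rw [hp1] at h1 <;>
        cases hp2 : proj l (substAs (fun z => if z = x then .var z else s z) e2) <;>
        rw [hp2] at h1 <;> simp at h1
      rename_i p1 p2
      cases hq1 : proj l e1 <;> rw [hq1] at h2 <;>
        cases hq2 : proj l e2 <;> rw [hq2] at h2 <;> simp at h2
      rename_i q1 q2
      by_cases hv : isVal p1
      · simp [hv] at h1
        subst h1
        have hv1 : isVal q1 = true := ih1 s p1 q1 hp1 hv hq1
        simp [hv1] at h2
        subst h2
        exact ih2 _ _ _ hp2 hb hq2
      · simp [hv] at h1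
        subst h1; simp [isVal] at hb
  | aif v a e1 e2 ih1 ih2 =>
    simp only [substAs, proj] at h1 h2
    by_cases hl : subA l a <;> simp only [hl, if_true, if_false, Bool.false_eq_true] at h1 h2
    · cases hp1 : proj l (substAs s e1) <;> rw [hp1] at h1 <;>
        cases hp2 : proj l (substAs s e2) <;> rw [hp2] at h1 <;> simp at h1
      subst h1; simp [isVal] at hb
    · cases hp1 : proj l (substAs s e1) <;> rw [hp1] at h1 <;>
        cases hp2 : proj l (substAs s e2) <;> rw [hp2] at h1 <;> simp at h1
      rename_i p1 p2
      cases hq1 : proj l e1 <;> rw [hq1] at h2 <;>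
        cases hq2 : proj l e2 <;> rw [hq2] at h2 <;> simp at h2
      rename_i q1 q2
      obtain ⟨hpp, rfl⟩ : p1 = p2 ∧ p1 = b := by
        by_cases h : p1 = p2 <;> simp [h] at h1
        exact ⟨h, h ▸ h1⟩
      obtain ⟨hqq, rfl⟩ : q1 = q2 ∧ q1 = b' := by
        by_cases h : q1 = q2 <;> simp [h] at h2
        exact ⟨h, h ▸ h2⟩
      exact ih1 s _ _ hp1 hb hq1
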